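/- Let M be a model of the theory of substitutions 𝕊 and let A be an element of sort (ty, k) (a type over a context of length k). Then the assignment a ↦ (v_{k,k-1}(ft_k(A)), ..., v_{k,0}(ft_k(A)), a) is a bijection between the set of terms a ∈ M_{(tm,k)} with ty_k(a) = A and the set of morphisms f : ft_k(A) → A in the associated category satisfying p_A ∘ f = id_{ft_k(A)} (i.e., sections of the projection p_A). -/
import Mathlib


universe u

/-- Iterated `ft`, lowering a context of length `k` to one of length `m ≤ k`. -/
def ftLe' {Ctx : ℕ → Type u} (ft : ∀ n, Ctx (n + 1) → Ctx n) :
    ∀ {k m : ℕ}, m ≤ k → Ctx k → Ctx m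
  | 0, 0, _, A => A
  | k + 1, m, h, A =>
    if hm : m = k + 1 then cast (congrArg Ctx hm.symm) A
    else ftLe' ft (by omega) (ft k A)

/-- A model of the partial Horn theory of substitutions `𝕊`: sorts `(ctx, n)` and `(tm, n)`
(with `(ty, n) := (ctx, n+1)`), operations `*`, `ft`, `ty`, variables `v_{n,i}` and full
substitution `subst_{p,n,k}` (a partial operation, represented using `Part`), subject to the
axioms of `𝕊`. -/
structure SubModel : Type (u + 1) where
  Ctx : ℕ → Type u
  Tm : ℕ → Type u
  star : Ctx 0
  ctx_zero_unique : ∀ A : Ctx 0, A = star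
  ft : ∀ n, Ctx (n + 1) → Ctx n
  ty : ∀ n, Tm n → Ctx (n + 1)
  v : ∀ n i, i < n → Ctx n → Tm n
  substTy : ∀ n k, Ctx n → Ctx (k + 1) → (Fin k → Tm n) → Part (Ctx (n + 1))
  substTm : ∀ n k, Ctx n → Tm k → (Fin k → Tm n) → Part (Tm n)
  -- the axioms are stated below, after the auxiliary definitions
  ax_def_substTy : ∀ n k (B : Ctx n) (A : Ctx (k + 1)) (a : Fin k → Tm n),
    (substTy n k B A a).Dom ↔
      ∀ i : Fin k, ty n (a i) ∈ substTy n i B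
        (ftLe' ft (Nat.succ_le_of_lt i.isLt) (ft k A))
        (fun j => a (Fin.castLE (le_of_lt i.isLt) j))
  ax_def_substTm : ∀ n k (B : Ctx n) (b : Tm k) (a : Fin k → Tm n),
    (substTm n k B b a).Dom ↔
      ∀ i : Fin k, ty n (a i) ∈ substTy n i B
        (ftLe' ft (Nat.succ_le_of_lt i.isLt) (ft k (ty k b)))
        (fun j => a (Fin.castLE (le_of_lt i.isLt) j))
  ax_type_var : ∀ n i (h : i < n) (A : Ctx n),
    ty n (v n i h A) ∈ substTy n (n - i - 1) A
      (ftLe' ft (by omega) A)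
      (fun j => v n (n - 1 - j) (by omega) A)
  ax_type_substTy : ∀ n k B A a C, C ∈ substTy n k B A a → ft n C = B
  ax_type_substTm : ∀ n k (B : Ctx n) (b : Tm k) (a : Fin k → Tm n),
    (substTm n k B b a).map (ty n) = substTy n k B (ty k b) a
  ax_subst_var_ty : ∀ n (A : Ctx (n + 1)),
    substTy n n (ft n A) A (fun j => v n (n - 1 - j) (by omega) (ft n A)) = Part.some A
  ax_subst_var_tm : ∀ n (b : Tm n),
    substTm n n (ft n (ty n b)) b
      (fun j => v n (n - 1 - j) (by omega) (ft n (ty n b))) = Part.some b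
  ax_var_subst : ∀ n k (B : Ctx n) (A : Ctx k) (a : Fin k → Tm n)
    (_ : ∀ i : Fin k, ty n (a i) ∈ substTy n i B
        (ftLe' ft (Nat.succ_le_of_lt i.isLt) A)
        (fun j => a (Fin.castLE (le_of_lt i.isLt) j)))
    (i : ℕ) (h : i < k),
    substTm n k B (v k i h A) a = Part.some (a ⟨k - i - 1, by omega⟩)
  ax_subst_subst_tm : ∀ n k m (C : Ctx n) (B : Ctx k) (b : Fin k → Tm n)
    (a : Fin m → Tm k) (t : Tm m)
    (_ : ∀ i : Fin k, ty n (b i) ∈ substTy n i C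
        (ftLe' ft (Nat.succ_le_of_lt i.isLt) B)
        (fun j => b (Fin.castLE (le_of_lt i.isLt) j)))
    (_ : ∀ i : Fin m, ty k (a i) ∈ substTy k i B
        (ftLe' ft (Nat.succ_le_of_lt i.isLt) (ft m (ty m t)))
        (fun j => a (Fin.castLE (le_of_lt i.isLt) j)))
    (s : Tm k) (_ : s ∈ substTm k m B t a)
    (c : Fin m → Tm n) (_ : ∀ i, c i ∈ substTm n k C (a i) b),
    substTm n k C s b = substTm n m C t c
  ax_subst_subst_ty : ∀ n k m (C : Ctx n) (B : Ctx k) (b : Fin k → Tm n)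
    (a : Fin m → Tm k) (A : Ctx (m + 1))
    (_ : ∀ i : Fin k, ty n (b i) ∈ substTy n i C
        (ftLe' ft (Nat.succ_le_of_lt i.isLt) B)
        (fun j => b (Fin.castLE (le_of_lt i.isLt) j)))
    (_ : ∀ i : Fin m, ty k (a i) ∈ substTy k i B
        (ftLe' ft (Nat.succ_le_of_lt i.isLt) (ft m A))
        (fun j => a (Fin.castLE (le_of_lt i.isLt) j)))
    (A' : Ctx (k + 1)) (_ : A' ∈ substTy k m B A a)
    (c : Fin m → Tm n) (_ : ∀ i, c i ∈ substTm n k C (a i) b),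
    substTy n k C A' b = substTy n m C A c


namespace SubModel

variable (M : SubModel.{u})

/-- The `Hom` predicate of `𝕊`: the tuple `(a_1, …, a_k)` is a morphism `B → A` of the
associated category, i.e. each `a_i` has the type obtained by substituting `a_1, …, a_{i-1}`
into the `i`-th component of `A`. -/
def Hom (n k : ℕ) (B : M.Ctx n) (A : M.Ctx k) (a : Fin k → M.Tm n) : Prop :=
  ∀ i : Fin k, M.ty n (a i) ∈ M.substTy n i B
    (ftLe' M.ft (Nat.succ_le_of_lt i.isLt) A)
    (fun j => a (Fin.castLE (le_of_lt i.isLt) j))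

/-- The identity morphism `id_A = (v_{n,n-1}(A), …, v_{n,0}(A))`. -/
def idTuple {n : ℕ} (A : M.Ctx n) : Fin n → M.Tm n :=
  fun j => M.v n (n - 1 - j) (by omega) A

/-- The projection `p_A = (v_{n+1,n}(A), …, v_{n+1,1}(A)) : A → ft(A)`. -/
def pTuple {n : ℕ} (A : M.Ctx (n + 1)) : Fin n → M.Tm (n + 1) :=
  fun j => M.v (n + 1) (n - j) (by omega) A

/-- `f : ft(A) → A` is a section of the projection `p_A`: it is a morphism and
`p_A ∘ f = id_{ft(A)}` (composition is componentwise substitution). -/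
def IsSection {k : ℕ} (A : M.Ctx (k + 1)) (f : Fin (k + 1) → M.Tm k) : Prop :=
  M.Hom k (k + 1) (M.ft k A) A f ∧
  ∀ j : Fin k, M.substTm k (k + 1) (M.ft k A) (M.pTuple A j) f =
    Part.some (M.idTuple (M.ft k A) j)

/-- The map `φ(a) = (v_{k,k-1}(ft A), …, v_{k,0}(ft A), a)`. -/
def phi {k : ℕ} (A : M.Ctx (k + 1)) (a : M.Tm k) : Fin (k + 1) → M.Tm k :=
  fun j => if h : (j : ℕ) < k then M.v k (k - 1 - j) (by omega) (M.ft k A) else a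

end SubModel

theorem ftLe'_step {Ctx : ℕ → Type u} (ft : ∀ n, Ctx (n + 1) → Ctx n) {k m : ℕ}
    (h : m ≤ k) (h' : m ≤ k + 1) (A : Ctx (k + 1)) :
    ftLe' ft h' A = ftLe' ft h (ft k A) := by
  rw [ftLe', dif_neg (by omega)]

theorem ftLe'_refl {Ctx : ℕ → Type u} (ft : ∀ n, Ctx (n + 1) → Ctx n) {k : ℕ}
    (h : k + 1 ≤ k + 1) (A : Ctx (k + 1)) :
    ftLe' ft h A = A := by
  rw [ftLe', dif_pos rfl]
  rfl

theorem v_congr (M : SubModel.{u}) (n i i' : ℕ) (h : i < n) (h' : i' < n)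
    (e : i = i') (A : M.Ctx n) : M.v n i h A = M.v n i' h' A := by
  subst e; rfl

theorem type_var' (M : SubModel.{u}) (n i i' : ℕ) (h : i' < n) (hi : i = n - i' - 1)
    (h2 : i + 1 ≤ n) (A : M.Ctx n) :
    M.ty n (M.v n i' h A) ∈ M.substTy n i A (ftLe' M.ft h2 A)
      (fun j => M.v n (n - 1 - j) (by omega) A) := by
  subst hi
  exact M.ax_type_var n i' h A

/-- For a model `M` of the theory of substitutions `𝕊` and a type
`A ∈ M_{(ty,k)}`, the assignment `a ↦ (v_{k,k-1}(ft A), …, v_{k,0}(ft A), a)` is a bijection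
between the terms `a` with `ty(a) = A` and the sections of the projection `p_A`. -/
theorem submodel_terms_biject_with_sections (M : SubModel.{u}) (k : ℕ)
    (A : M.Ctx (k + 1)) :
    Set.BijOn (M.phi A) { a : M.Tm k | M.ty k a = A }
      { f : Fin (k + 1) → M.Tm k | M.IsSection A f } := by
  have hk1 : k < k + 1 := Nat.lt_succ_self k
  -- phi at an index < k
  have phi_lt : ∀ (a : M.Tm k) (j : Fin (k + 1)) (hj : (j : ℕ) < k),
      M.phi A a j = M.v k (k - 1 - j) (by omega) (M.ft k A) := by
    intro a j hj
    simp only [SubModel.phi, dif_pos hj]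
  have phi_last : ∀ (a : M.Tm k), M.phi A a ⟨k, hk1⟩ = a := by
    intro a
    simp only [SubModel.phi, dif_neg (lt_irrefl k)]
  -- the key: phi of a term of type A is a Hom
  have hom_phi : ∀ a : M.Tm k, M.ty k a = A →
      M.Hom k (k + 1) (M.ft k A) A (M.phi A a) := by
    intro a ha i
    obtain ⟨iv, hiv⟩ := i
    by_cases hi : iv < k
    · -- a variable component
      have efun : (fun j : Fin iv => M.phi A a (Fin.castLE (le_of_lt hiv) j)) =
          (fun j : Fin iv => M.v k (k - 1 - j) (by omega) (M.ft k A)) := by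
        funext j
        exact phi_lt a _ (by simpa using lt_trans j.isLt hi)
      rw [show M.phi A a ⟨iv, hiv⟩ = M.v k (k - 1 - iv) (by omega) (M.ft k A) from
        phi_lt a _ hi, efun,
        ftLe'_step M.ft (by omega : iv + 1 ≤ k) _ A]
      exact type_var' M k iv (k - 1 - iv) (by omega) (by omega) (by omega) (M.ft k A)
    · have hik : iv = k := by omega
      subst hik
      have efun : (fun j : Fin iv => M.phi A a (Fin.castLE (le_of_lt hiv) j)) =
          (fun j : Fin iv => M.v iv (iv - 1 - j) (by omega) (M.ft iv A)) := by
        funext j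
        exact phi_lt a _ (by simpa using j.isLt)
      rw [efun, ftLe'_refl, phi_last, M.ax_subst_var_ty iv A]
      exact Part.mem_some_iff.mpr ha
  constructor
  · -- MapsTo
    intro a ha
    have ha' : M.ty k a = A := ha
    refine ⟨hom_phi a ha', ?_⟩
    intro j
    rw [SubModel.pTuple,
      M.ax_var_subst k (k + 1) (M.ft k A) A (M.phi A a) (hom_phi a ha') (k - j)
        (by omega)]
    congr 1
    have hj' : k + 1 - (k - (j : ℕ)) - 1 < k := by omega
    rw [phi_lt a ⟨k + 1 - (k - (j : ℕ)) - 1, by omega⟩ hj']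
    exact v_congr M k _ _
      (show k - 1 - (k + 1 - (k - (j : ℕ)) - 1) < k by omega)
      (by omega)
      (show k - 1 - (k + 1 - (k - (j : ℕ)) - 1) = k - 1 - (j : ℕ) by omega) (M.ft k A)
  constructor
  · -- InjOn
    intro a _ a' _ h
    have := congrFun h ⟨k, hk1⟩
    rwa [phi_last, phi_last] at this
  · -- SurjOn
    intro f hf
    obtain ⟨hhom, hsec⟩ := hf
    set a := f ⟨k, hk1⟩ with haf
    -- the first k components of f are variables
    have hfv : ∀ (j : Fin (k + 1)) (hj : (j : ℕ) < k),
        f j = M.v k (k - 1 - j) (by omega) (M.ft k A) := by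
      intro j hj
      have h1 := hsec ⟨j, hj⟩
      rw [SubModel.pTuple,
        M.ax_var_subst k (k + 1) (M.ft k A) A f hhom (k - ↑(⟨j, hj⟩ : Fin k))
          (by omega)] at h1
      have h2 := Part.some_injective h1
      have e : (⟨k + 1 - (k - ↑(⟨(j : ℕ), hj⟩ : Fin k)) - 1, by omega⟩ : Fin (k + 1)) = j := by
        apply Fin.ext
        show k + 1 - (k - (j : ℕ)) - 1 = (j : ℕ)
        omega
      rw [e] at h2
      exact h2
    -- the type of a is A
    have hta : M.ty k a = A := by
      have h1 := hhom ⟨k, hk1⟩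
      have efun : (fun j : Fin k => f (Fin.castLE (le_of_lt hk1) j)) =
          (fun j : Fin k => M.v k (k - 1 - j) (by omega) (M.ft k A)) := by
        funext j
        rw [hfv _ (by simpa using j.isLt)]
        simp only [Fin.coe_castLE]
      rw [efun, ftLe'_refl, M.ax_subst_var_ty k A] at h1
      exact Part.mem_some_iff.mp h1
    refine ⟨a, hta, ?_⟩
    funext j
    by_cases hj : (j : ℕ) < k
    · rw [phi_lt a j hj, hfv j hj]
    · have : j = ⟨k, hk1⟩ := Fin.ext (show (j : ℕ) = k by omega)
      rw [this, phi_last]
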